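/- Let u : ℝ → ℝ be continuous with compact support and globally Hölder continuous: there exist β ∈ (0,1] and M ≥ 0 with |u(s) − u(t)| ≤ M|s − t|^β for all s, t ∈ ℝ. Then for every x ∈ ℝ, the limit as α → 0⁺ of −c_{1,α} ∫_0^∞ δ²u(x,ξ) ξ^{−(1+α)} dξ equals u(x); that is, the fractional Laplacian converges pointwise to the identity operator as α → 0⁺. -/

import Mathlib

open MeasureTheory Set Filter

/-- The one-dimensional normalization constant
`c_{1,α} = 2^{α−1} α Γ((1+α)/2) / (√π Γ(1 − α/2))` of the fractional Laplacian. -/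
noncomputable def fracLapConst (α : ℝ) : ℝ :=
  2 ^ (α - 1) * α * Real.Gamma ((1 + α) / 2) / (Real.sqrt Real.pi * Real.Gamma (1 - α / 2))

/-- If `u : ℝ → ℝ` is continuous with compact support and globally `β`-Hölder continuous,
then for every `x` the fractional Laplacian
`−c_{1,α} ∫_0^∞ δ²u(x,ξ) ξ^{−(1+α)} dξ` converges to `u(x)` as `α → 0⁺`. -/
theorem stmt19 (u : ℝ → ℝ) (hcont : Continuous u) (hsupp : HasCompactSupport u)
    (β M : ℝ) (hβ : β ∈ Set.Ioc (0:ℝ) 1) (hM : 0 ≤ M)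
    (hHolder : ∀ s t : ℝ, |u s - u t| ≤ M * |s - t| ^ β) (x : ℝ) :
    Filter.Tendsto (fun α : ℝ =>
        -(fracLapConst α *
          ∫ ξ in Set.Ioi (0:ℝ), (u (x + ξ) - 2 * u x + u (x - ξ)) * ξ ^ (-(1 + α))))
      (nhdsWithin 0 (Set.Ioi 0)) (nhds (u x)) := by
  obtain ⟨hβ0, hβ1⟩ := hβ
  -- global bound on u
  obtain ⟨C, hC⟩ := hsupp.exists_bound_of_continuous hcont
  have hC' : ∀ y, |u y| ≤ C := fun y => by simpa using hC y
  have hC0 : 0 ≤ C := le_trans (abs_nonneg _) (hC' 0)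
  -- support radius
  obtain ⟨R, hR⟩ := hsupp.isBounded.subset_closedBall 0
  set T : ℝ := |R| + |x| + 1 with hTdef
  have hT1 : 1 ≤ T := by
    rw [hTdef]
    have := abs_nonneg R; have := abs_nonneg x; linarith
  have hvan : ∀ ξ : ℝ, T < ξ → u (x + ξ) = 0 ∧ u (x - ξ) = 0 := by
    intro ξ hξ
    have hξ0 : (0:ℝ) < ξ := by linarith
    have hRa : R ≤ |R| := le_abs_self R
    constructor
    · apply image_eq_zero_of_notMem_tsupport
      intro hmem
      have hball := hR hmem
      simp only [Metric.mem_closedBall, Real.dist_eq, sub_zero] at hball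
      have h1 : ξ - |x| ≤ |x + ξ| := by
        have h4 : |ξ| ≤ |x + ξ| + |x| := by
          calc |ξ| = |(x + ξ) - x| := by congr 1; ring
            _ ≤ |x + ξ| + |x| := abs_sub _ _
        rw [abs_of_pos hξ0] at h4
        linarith
      linarith
    · apply image_eq_zero_of_notMem_tsupport
      intro hmem
      have hball := hR hmem
      simp only [Metric.mem_closedBall, Real.dist_eq, sub_zero] at hball
      have h1 : ξ - |x| ≤ |x - ξ| := by
        have h4 : |ξ| ≤ |x| + |x - ξ| := by
          calc |ξ| = |x - (x - ξ)| := by congr 1; ring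
            _ ≤ |x| + |x - ξ| := abs_sub _ _
        rw [abs_of_pos hξ0] at h4
        linarith
      linarith
  -- key decomposition for each small positive α
  have key : ∀ α : ℝ, α ∈ Ioo (0:ℝ) (β/2) →
      (∫ ξ in Set.Ioi (0:ℝ), (u (x + ξ) - 2 * u x + u (x - ξ)) * ξ ^ (-(1 + α))) =
        (∫ ξ in Set.Ioc (0:ℝ) 1, (u (x + ξ) - 2 * u x + u (x - ξ)) * ξ ^ (-(1 + α))) +
        (∫ ξ in Set.Ioi (1:ℝ), (u (x + ξ) + u (x - ξ)) * ξ ^ (-(1 + α))) - 2 * u x * (1/α) ∧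
      |∫ ξ in Set.Ioc (0:ℝ) 1, (u (x + ξ) - 2 * u x + u (x - ξ)) * ξ ^ (-(1 + α))| ≤ 4*M/β ∧
      |∫ ξ in Set.Ioi (1:ℝ), (u (x + ξ) + u (x - ξ)) * ξ ^ (-(1 + α))| ≤ 2*C*T := by
    intro α hα
    obtain ⟨hα0, hα2⟩ := hα
    have hαβ : α < β := lt_of_lt_of_le hα2 (by linarith)
    set p : ℝ := -(1 + α) with hp
    have hplt : p < -1 := by rw [hp]; linarith
    have hpneg : p ≤ 0 := by rw [hp]; linarith
    set f : ℝ → ℝ := fun ξ => u (x + ξ) - 2 * u x + u (x - ξ) with hfdef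
    have hfc : Continuous f := by fun_prop
    have hfb : ∀ ξ : ℝ, 0 < ξ → |f ξ| ≤ 2 * M * ξ ^ β := by
      intro ξ hξ
      have h1 := hHolder (x + ξ) x
      have h2 := hHolder (x - ξ) x
      have e1 : |x + ξ - x| = ξ := by rw [add_sub_cancel_left, abs_of_pos hξ]
      have e2 : |x - ξ - x| = ξ := by
        rw [show x - ξ - x = -ξ by ring, abs_neg, abs_of_pos hξ]
      rw [e1] at h1; rw [e2] at h2
      calc |f ξ| = |(u (x + ξ) - u x) + (u (x - ξ) - u x)| := by
            rw [hfdef]; congr 1; ring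
        _ ≤ |u (x + ξ) - u x| + |u (x - ξ) - u x| := abs_add_le _ _
        _ ≤ M * ξ ^ β + M * ξ ^ β := add_le_add h1 h2
        _ = 2 * M * ξ ^ β := by ring
    have hmeas1 : AEStronglyMeasurable (fun ξ : ℝ => f ξ * ξ ^ p)
        (volume.restrict (Ioc (0:ℝ) 1)) := by
      apply ContinuousOn.aestronglyMeasurable _ measurableSet_Ioc
      exact (hfc.continuousOn).mul (continuousOn_id.rpow_const fun ξ hξ => Or.inl (ne_of_gt hξ.1))
    have hgint : IntegrableOn (fun ξ : ℝ => 2 * M * ξ ^ (β - 1 - α)) (Ioc (0:ℝ) 1) :=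
      ((intervalIntegral.intervalIntegrable_rpow' (by linarith : (-1:ℝ) < β - 1 - α)).1).const_mul _
    have hbd1 : ∀ ξ ∈ Ioc (0:ℝ) 1, ‖f ξ * ξ ^ p‖ ≤ 2 * M * ξ ^ (β - 1 - α) := by
      intro ξ hξ
      have hξ0 : 0 < ξ := hξ.1
      have hppos : (0:ℝ) < ξ ^ p := Real.rpow_pos_of_pos hξ0 _
      rw [norm_mul, Real.norm_eq_abs, Real.norm_eq_abs, abs_of_pos hppos]
      calc |f ξ| * ξ ^ p ≤ (2 * M * ξ ^ β) * ξ ^ p :=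
            mul_le_mul_of_nonneg_right (hfb ξ hξ0) hppos.le
        _ = 2 * M * ξ ^ (β - 1 - α) := by
            rw [mul_assoc, ← Real.rpow_add hξ0]
            congr 2
            rw [hp]; ring
    have hint1 : IntegrableOn (fun ξ : ℝ => f ξ * ξ ^ p) (Ioc (0:ℝ) 1) := by
      apply Integrable.mono' hgint hmeas1
      rw [ae_restrict_iff' measurableSet_Ioc]
      exact Eventually.of_forall hbd1
    have hrint : IntegrableOn (fun ξ : ℝ => ξ ^ p) (Ioi (1:ℝ)) :=
      integrableOn_Ioi_rpow_of_lt hplt one_pos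
    have hmeas2 : AEStronglyMeasurable (fun ξ : ℝ => (u (x + ξ) + u (x - ξ)) * ξ ^ p)
        (volume.restrict (Ioi (1:ℝ))) := by
      apply ContinuousOn.aestronglyMeasurable _ measurableSet_Ioi
      apply ContinuousOn.mul (by fun_prop)
      exact continuousOn_id.rpow_const fun ξ hξ => Or.inl (ne_of_gt (lt_trans one_pos hξ))
    have hbd2 : ∀ ξ ∈ Ioi (1:ℝ), ‖(u (x + ξ) + u (x - ξ)) * ξ ^ p‖ ≤ 2 * C * ξ ^ p := by
      intro ξ hξ
      have hξ0 : (0:ℝ) < ξ := lt_trans one_pos hξ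
      have hppos : (0:ℝ) < ξ ^ p := Real.rpow_pos_of_pos hξ0 _
      rw [norm_mul, Real.norm_eq_abs, Real.norm_eq_abs, abs_of_pos hppos]
      apply mul_le_mul_of_nonneg_right _ hppos.le
      calc |u (x + ξ) + u (x - ξ)| ≤ |u (x + ξ)| + |u (x - ξ)| := abs_add_le _ _
        _ ≤ C + C := add_le_add (hC' _) (hC' _)
        _ = 2 * C := by ring
    have hint2 : IntegrableOn (fun ξ : ℝ => (u (x + ξ) + u (x - ξ)) * ξ ^ p) (Ioi (1:ℝ)) := by
      apply Integrable.mono' (hrint.const_mul (2*C)) hmeas2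
      rw [ae_restrict_iff' measurableSet_Ioi]
      exact Eventually.of_forall hbd2
    have hint3 : IntegrableOn (fun ξ : ℝ => 2 * u x * ξ ^ p) (Ioi (1:ℝ)) :=
      hrint.const_mul _
    have hfeq : (fun ξ : ℝ => f ξ * ξ ^ p) =
        fun ξ : ℝ => (u (x + ξ) + u (x - ξ)) * ξ ^ p - 2 * u x * ξ ^ p := by
      funext ξ; rw [hfdef]; ring
    have hint4 : IntegrableOn (fun ξ : ℝ => f ξ * ξ ^ p) (Ioi (1:ℝ)) := by
      rw [hfeq]; exact hint2.sub hint3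
    have hval : (∫ ξ in Ioi (1:ℝ), ξ ^ p) = 1/α := by
      rw [integral_Ioi_rpow_of_lt hplt one_pos, Real.one_rpow]
      rw [hp, show -(1 + α) + 1 = -α by ring, div_neg, neg_div, neg_neg]
    refine ⟨?_, ?_, ?_⟩
    · -- decomposition
      have hsplit : (∫ ξ in Ioi (0:ℝ), f ξ * ξ ^ p) =
          (∫ ξ in Ioc (0:ℝ) 1, f ξ * ξ ^ p) + ∫ ξ in Ioi (1:ℝ), f ξ * ξ ^ p := by
        rw [← Ioc_union_Ioi_eq_Ioi (zero_le_one : (0:ℝ) ≤ 1),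
          setIntegral_union (Ioc_disjoint_Ioi le_rfl) measurableSet_Ioi hint1 hint4]
      have h2nd : (∫ ξ in Ioi (1:ℝ), f ξ * ξ ^ p) =
          (∫ ξ in Ioi (1:ℝ), (u (x + ξ) + u (x - ξ)) * ξ ^ p) - 2 * u x * (1/α) := by
        rw [hfeq, integral_sub hint2 hint3]
        congr 1
        rw [integral_const_mul, hval]
      rw [hsplit, h2nd]
      ring
    · -- bound A
      have step1 : |∫ ξ in Ioc (0:ℝ) 1, f ξ * ξ ^ p| ≤
          ∫ ξ in Ioc (0:ℝ) 1, 2 * M * ξ ^ (β - 1 - α) := by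
        rw [← Real.norm_eq_abs]
        apply norm_integral_le_of_norm_le hgint
        rw [ae_restrict_iff' measurableSet_Ioc]
        exact Eventually.of_forall hbd1
      have step2 : (∫ ξ in Ioc (0:ℝ) 1, 2 * M * ξ ^ (β - 1 - α)) = 2 * M * (1/(β - α)) := by
        rw [integral_const_mul]
        congr 1
        rw [← intervalIntegral.integral_of_le zero_le_one,
          integral_rpow (Or.inl (by linarith : (-1:ℝ) < β - 1 - α))]
        rw [show β - 1 - α + 1 = β - α by ring, Real.one_rpow,
          Real.zero_rpow (sub_ne_zero.mpr hαβ.ne')]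
        ring
      have step3 : 2 * M * (1/(β - α)) ≤ 4 * M / β := by
        calc 2 * M * (1/(β - α)) = 2 * M / (β - α) := by ring
          _ ≤ 2 * M / (β/2) := by gcongr <;> linarith
          _ = 4 * M / β := by rw [div_div_eq_mul_div]; ring
      exact le_trans (le_trans step1 (le_of_eq step2)) step3
    · -- bound B
      have hzero : (∫ ξ in Ioi T, (u (x + ξ) + u (x - ξ)) * ξ ^ p) = 0 := by
        apply setIntegral_eq_zero_of_forall_eq_zero
        intro ξ hξ
        rw [(hvan ξ hξ).1, (hvan ξ hξ).2]
        ring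
      have hsplitB : (∫ ξ in Ioi (1:ℝ), (u (x + ξ) + u (x - ξ)) * ξ ^ p) =
          ∫ ξ in Ioc (1:ℝ) T, (u (x + ξ) + u (x - ξ)) * ξ ^ p := by
        rw [← Ioc_union_Ioi_eq_Ioi hT1,
          setIntegral_union (Ioc_disjoint_Ioi le_rfl) measurableSet_Ioi
            (hint2.mono_set Ioc_subset_Ioi_self) (hint2.mono_set (Ioi_subset_Ioi hT1)),
          hzero, add_zero]
      rw [hsplitB, ← Real.norm_eq_abs]
      have hbd3 : ∀ ξ ∈ Ioc (1:ℝ) T, ‖(u (x + ξ) + u (x - ξ)) * ξ ^ p‖ ≤ 2 * C := by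
        intro ξ hξ
        have hξ0 : (0:ℝ) < ξ := lt_trans one_pos hξ.1
        have hppos : (0:ℝ) < ξ ^ p := Real.rpow_pos_of_pos hξ0 _
        have hple : ξ ^ p ≤ 1 := Real.rpow_le_one_of_one_le_of_nonpos hξ.1.le hpneg
        rw [norm_mul, Real.norm_eq_abs, Real.norm_eq_abs, abs_of_pos hppos]
        have huu : |u (x + ξ) + u (x - ξ)| ≤ 2 * C := by
          calc |u (x + ξ) + u (x - ξ)| ≤ |u (x + ξ)| + |u (x - ξ)| := abs_add_le _ _
            _ ≤ C + C := add_le_add (hC' _) (hC' _)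
            _ = 2 * C := by ring
        calc |u (x + ξ) + u (x - ξ)| * ξ ^ p ≤ 2 * C * 1 :=
              mul_le_mul huu hple hppos.le (by linarith)
          _ = 2 * C := mul_one _
      calc ‖∫ ξ in Ioc (1:ℝ) T, (u (x + ξ) + u (x - ξ)) * ξ ^ p‖ ≤
            2 * C * (volume (Ioc (1:ℝ) T)).toReal :=
            norm_setIntegral_le_of_norm_le_const measure_Ioc_lt_top hbd3
        _ = 2 * C * (T - 1) := by
            rw [Real.volume_Ioc, ENNReal.toReal_ofReal (by linarith)]
        _ ≤ 2 * C * T := by nlinarith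
  -- limit of c/α
  have hpi : Real.sqrt Real.pi ≠ 0 := by positivity
  have hcdiv : Tendsto (fun α : ℝ => fracLapConst α / α) (nhdsWithin 0 (Set.Ioi 0))
      (nhds (1/2)) := by
    have hg : ContinuousAt (fun α : ℝ =>
        2 ^ (α - 1) * Real.Gamma ((1 + α) / 2) / (Real.sqrt Real.pi * Real.Gamma (1 - α / 2))) 0 := by
      have h1 : ContinuousAt (fun α : ℝ => (2:ℝ) ^ (α - 1)) 0 := by
        have hc := Real.continuousAt_const_rpow (a := 2) (b := (0:ℝ) - 1) two_ne_zero
        have hin : ContinuousAt (fun α : ℝ => α - 1) 0 := continuousAt_id.sub continuousAt_const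
        simpa [Function.comp_def] using ContinuousAt.comp (f := fun α : ℝ => α - 1) (x := 0) hc hin
      have h2 : ContinuousAt (fun α : ℝ => Real.Gamma ((1 + α) / 2)) 0 := by
        have hG : ContinuousAt Real.Gamma ((1 + (0:ℝ)) / 2) := by
          apply (Real.differentiableAt_Gamma ?_).continuousAt
          intro m
          have : (0:ℝ) ≤ m := m.cast_nonneg
          intro h; norm_num at h; linarith
        have hin : ContinuousAt (fun α : ℝ => (1 + α) / 2) 0 :=
          (continuousAt_const.add continuousAt_id).div_const 2
        simpa [Function.comp_def] using
          ContinuousAt.comp (f := fun α : ℝ => (1 + α) / 2) (x := 0) hG hin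
      have h3 : ContinuousAt (fun α : ℝ => Real.sqrt Real.pi * Real.Gamma (1 - α / 2)) 0 := by
        have hG : ContinuousAt Real.Gamma (1 - (0:ℝ) / 2) := by
          apply (Real.differentiableAt_Gamma ?_).continuousAt
          intro m
          have : (0:ℝ) ≤ m := m.cast_nonneg
          intro h; norm_num at h; linarith
        have hin : ContinuousAt (fun α : ℝ => 1 - α / 2) 0 :=
          continuousAt_const.sub (continuousAt_id.div_const 2)
        exact continuousAt_const.mul
          (by simpa [Function.comp_def] using
            ContinuousAt.comp (f := fun α : ℝ => 1 - α / 2) (x := 0) hG hin)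
      apply (h1.mul h2).div h3
      simp [hpi, Real.Gamma_one]
    have hvalc : (2:ℝ) ^ ((0:ℝ) - 1) * Real.Gamma ((1 + 0) / 2) /
        (Real.sqrt Real.pi * Real.Gamma (1 - 0 / 2)) = 1/2 := by
      rw [zero_sub]
      rw [show ((1:ℝ) + 0) / 2 = 1/2 by norm_num, show (1:ℝ) - 0/2 = 1 by norm_num]
      rw [Real.Gamma_one, Real.Gamma_one_half_eq, Real.rpow_neg (by norm_num : (0:ℝ) ≤ 2),
        Real.rpow_one, mul_one]
      field_simp
    have htend := hg.tendsto.mono_left (nhdsWithin_le_nhds (s := Set.Ioi (0:ℝ)))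
    rw [hvalc] at htend
    apply htend.congr'
    filter_upwards [self_mem_nhdsWithin] with α hα
    have hα0 : α ≠ 0 := ne_of_gt hα
    have hrw : fracLapConst α = α * (2 ^ (α - 1) * Real.Gamma ((1 + α) / 2) /
        (Real.sqrt Real.pi * Real.Gamma (1 - α / 2))) := by
      rw [fracLapConst]; ring
    rw [hrw, mul_div_cancel_left₀ _ hα0]
  have hc0 : Tendsto fracLapConst (nhdsWithin 0 (Set.Ioi 0)) (nhds 0) := by
    have hid : Tendsto (fun α : ℝ => α) (nhdsWithin 0 (Set.Ioi (0:ℝ))) (nhds 0) :=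
      (continuous_id.tendsto 0).mono_left nhdsWithin_le_nhds
    have hmul := hcdiv.mul hid
    rw [mul_zero] at hmul
    apply hmul.congr'
    filter_upwards [self_mem_nhdsWithin] with α hα
    exact div_mul_cancel₀ _ (ne_of_gt hα)
  have hmem : Ioo (0:ℝ) (β/2) ∈ nhdsWithin (0:ℝ) (Set.Ioi 0) :=
    Ioo_mem_nhdsGT (by linarith)
  have h1 : Tendsto (fun α : ℝ => -(fracLapConst α *
      ((∫ ξ in Set.Ioc (0:ℝ) 1, (u (x + ξ) - 2 * u x + u (x - ξ)) * ξ ^ (-(1 + α))) +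
       (∫ ξ in Set.Ioi (1:ℝ), (u (x + ξ) + u (x - ξ)) * ξ ^ (-(1 + α))))))
      (nhdsWithin 0 (Set.Ioi 0)) (nhds 0) := by
    apply squeeze_zero_norm' (a := fun α : ℝ => |fracLapConst α| * (4*M/β + 2*C*T))
    · filter_upwards [hmem] with α hα
      obtain ⟨_, hA', hB'⟩ := key α hα
      rw [norm_neg, norm_mul, Real.norm_eq_abs, Real.norm_eq_abs]
      apply mul_le_mul_of_nonneg_left _ (abs_nonneg _)
      calc |(∫ ξ in Set.Ioc (0:ℝ) 1, (u (x + ξ) - 2 * u x + u (x - ξ)) * ξ ^ (-(1 + α))) +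
            (∫ ξ in Set.Ioi (1:ℝ), (u (x + ξ) + u (x - ξ)) * ξ ^ (-(1 + α)))| ≤
            |∫ ξ in Set.Ioc (0:ℝ) 1, (u (x + ξ) - 2 * u x + u (x - ξ)) * ξ ^ (-(1 + α))| +
            |∫ ξ in Set.Ioi (1:ℝ), (u (x + ξ) + u (x - ξ)) * ξ ^ (-(1 + α))| := abs_add_le _ _
        _ ≤ 4*M/β + 2*C*T := add_le_add hA' hB'
    · have := hc0.abs.mul_const (4*M/β + 2*C*T)
      simpa using this
  have h2 : Tendsto (fun α : ℝ => fracLapConst α / α * (2 * u x))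
      (nhdsWithin 0 (Set.Ioi 0)) (nhds (u x)) := by
    have := hcdiv.mul_const (2 * u x)
    rw [show (1/2 : ℝ) * (2 * u x) = u x by ring] at this
    exact this
  have hsum := h1.add h2
  rw [zero_add] at hsum
  apply hsum.congr'
  filter_upwards [hmem] with α hα
  obtain ⟨hdecomp, -, -⟩ := key α hα
  have hα0 : α ≠ 0 := ne_of_gt hα.1
  rw [hdecomp]
  field_simp
  ring
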